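/- For every y, x ∈ ℝ, t > 0, and τ > 0: |F^τ(y;x,t) − F̄(y;x,t)| ≤ M·(U₀·τ + (M/2)·τ²). In particular, as τ → 0+, F^τ(y;x,t) converges to F̄(y;x,t) uniformly in y. -/
import Mathlib


open MeasureTheory Set Filter Topology

noncomputable def Mtot (ρ : Measure ℝ) : ℝ := (ρ Set.univ).toReal

noncomputable def m0 (ρ : Measure ℝ) (y : ℝ) : ℝ := (ρ (Set.Iio y)).toReal

noncomputable def m0p (ρ : Measure ℝ) (y : ℝ) : ℝ := (ρ (Set.Iic y)).toReal

/-- `m̃₀(y) = (1/2)(ρ((−∞,y)) + ρ((−∞,y]) − M)`. -/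
noncomputable def mtilde (ρ : Measure ℝ) (y : ℝ) : ℝ :=
  (m0 ρ y + m0p ρ y - Mtot ρ) / 2
/-- The time-rescaled generalized potential `F^τ(y;x,t)`. -/
noncomputable def FpotT (ρ : Measure ℝ) (u₀ : ℝ → ℝ) (τ y x t : ℝ) : ℝ :=
  ∫ η in Set.Iio y,
    (η + u₀ η * (τ * (1 - Real.exp (-t / τ ^ 2)))
       + mtilde ρ η * (τ ^ 2 - τ ^ 2 * Real.exp (-t / τ ^ 2) - t) - x) ∂ρ

/-- The right-limit value `F^τ(y+;x,t)` (integral over `(−∞,y]`). -/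
noncomputable def FpotTP (ρ : Measure ℝ) (u₀ : ℝ → ℝ) (τ y x t : ℝ) : ℝ :=
  ∫ η in Set.Iic y,
    (η + u₀ η * (τ * (1 - Real.exp (-t / τ ^ 2)))
       + mtilde ρ η * (τ ^ 2 - τ ^ 2 * Real.exp (-t / τ ^ 2) - t) - x) ∂ρ

/-- The drift potential `F̄(y;x,t)`. -/
noncomputable def Fbar (ρ : Measure ℝ) (y x t : ℝ) : ℝ :=
  ∫ η in Set.Iio y, (η - t * mtilde ρ η - x) ∂ρ

/-- The right-limit value `F̄(y+;x,t)` (integral over `(−∞,y]`). -/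
noncomputable def FbarP (ρ : Measure ℝ) (y x t : ℝ) : ℝ :=
  ∫ η in Set.Iic y, (η - t * mtilde ρ η - x) ∂ρ

/-- `ν̄(x,t) = inf_y F̄(y;x,t)`. -/
noncomputable def nuBar (ρ : Measure ℝ) (x t : ℝ) : ℝ := ⨅ y : ℝ, Fbar ρ y x t

/-- `S̄(x,t)`. -/
def SBar (ρ : Measure ℝ) (x t : ℝ) : Set ℝ :=
  {y | ∃ yn : ℕ → ℝ, Tendsto yn atTop (𝓝 y) ∧
    Tendsto (fun n => Fbar ρ (yn n) x t) atTop (𝓝 (nuBar ρ x t))}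

lemma m0_meas (ρ : Measure ℝ) [IsFiniteMeasure ρ] : Measurable (m0 ρ) := by
  have : Monotone (m0 ρ) := fun a b hab =>
    ENNReal.toReal_mono (measure_ne_top ρ _) (measure_mono (Iio_subset_Iio hab))
  exact this.measurable

lemma m0p_meas (ρ : Measure ℝ) [IsFiniteMeasure ρ] : Measurable (m0p ρ) := by
  have : Monotone (m0p ρ) := fun a b hab =>
    ENNReal.toReal_mono (measure_ne_top ρ _) (measure_mono (Iic_subset_Iic.2 hab))
  exact this.measurable

lemma mtilde_meas (ρ : Measure ℝ) [IsFiniteMeasure ρ] : Measurable (mtilde ρ) := by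
  unfold mtilde
  exact (((m0_meas ρ).add (m0p_meas ρ)).sub measurable_const).div_const 2

lemma mtilde_abs (ρ : Measure ℝ) [IsFiniteMeasure ρ] (y : ℝ) :
    |mtilde ρ y| ≤ Mtot ρ / 2 := by
  have h1 : 0 ≤ m0 ρ y := ENNReal.toReal_nonneg
  have h2 : 0 ≤ m0p ρ y := ENNReal.toReal_nonneg
  have h3 : m0 ρ y ≤ Mtot ρ :=
    ENNReal.toReal_mono (measure_ne_top ρ _) (measure_mono (subset_univ _))
  have h4 : m0p ρ y ≤ Mtot ρ :=
    ENNReal.toReal_mono (measure_ne_top ρ _) (measure_mono (subset_univ _))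
  rw [abs_le, mtilde]
  constructor <;> nlinarith


theorem stmt17 (ρ : Measure ℝ) [IsFiniteMeasure ρ] (u₀ : ℝ → ℝ) (U₀ : ℝ)
    (hU₀ : 0 ≤ U₀)
    (hmom : Integrable (fun η : ℝ => η) ρ) (humeas : Measurable u₀)
    (hu : ∀ᵐ η ∂ρ, |u₀ η| ≤ U₀) :
    (∀ y x t τ : ℝ, 0 < t → 0 < τ →
      |FpotT ρ u₀ τ y x t - Fbar ρ y x t|
        ≤ Mtot ρ * (U₀ * τ + Mtot ρ / 2 * τ ^ 2)) ∧
    (∀ x t : ℝ, 0 < t →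
      TendstoUniformly (fun τ y => FpotT ρ u₀ τ y x t) (fun y => Fbar ρ y x t)
        (𝓝[>] (0 : ℝ))) := by
  have hM : 0 ≤ Mtot ρ := ENNReal.toReal_nonneg
  have hmt : Measurable (mtilde ρ) := mtilde_meas ρ
  have key : ∀ y x t τ : ℝ, 0 < t → 0 < τ →
      |FpotT ρ u₀ τ y x t - Fbar ρ y x t|
        ≤ Mtot ρ * (U₀ * τ + Mtot ρ / 2 * τ ^ 2) := by
    intro y x t τ ht hτ
    set e := Real.exp (-t / τ ^ 2) with he
    have he0 : 0 < e := Real.exp_pos _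
    have he1 : e ≤ 1 := by
      rw [he, Real.exp_le_one_iff]
      exact div_nonpos_of_nonpos_of_nonneg (by linarith) (by positivity)
    set c := τ * (1 - e) with hc
    set c2 := τ ^ 2 * (1 - e) with hc2
    have hc0 : 0 ≤ c := mul_nonneg hτ.le (by linarith)
    have hcτ : c ≤ τ := by nlinarith
    have hc20 : 0 ≤ c2 := mul_nonneg (by positivity) (by linarith)
    have hc2τ : c2 ≤ τ ^ 2 := by nlinarith [sq_nonneg τ]
    -- integrability
    have hmeas_h : Measurable (fun η => u₀ η * c + mtilde ρ η * c2) :=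
      (humeas.mul_const c).add (hmt.mul_const c2)
    have hbd : ∀ᵐ η ∂ρ.restrict (Iio y),
        ‖u₀ η * c + mtilde ρ η * c2‖ ≤ U₀ * τ + Mtot ρ / 2 * τ ^ 2 := by
      filter_upwards [ae_restrict_of_ae hu] with η hη
      have h1 : |u₀ η * c| ≤ U₀ * τ := by
        rw [abs_mul, abs_of_nonneg hc0]
        have := abs_nonneg (u₀ η)
        nlinarith
      have h2 : |mtilde ρ η * c2| ≤ Mtot ρ / 2 * τ ^ 2 := by
        rw [abs_mul, abs_of_nonneg hc20]
        have := mtilde_abs ρ η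
        have := abs_nonneg (mtilde ρ η)
        nlinarith
      calc ‖u₀ η * c + mtilde ρ η * c2‖ ≤ |u₀ η * c| + |mtilde ρ η * c2| :=
            abs_add_le _ _
        _ ≤ U₀ * τ + Mtot ρ / 2 * τ ^ 2 := add_le_add h1 h2
    have hint_h : Integrable (fun η => u₀ η * c + mtilde ρ η * c2)
        (ρ.restrict (Iio y)) :=
      Integrable.mono' (integrable_const (U₀ * τ + Mtot ρ / 2 * τ ^ 2))
        hmeas_h.aestronglyMeasurable hbd
    have hint_g : Integrable (fun η => η - t * mtilde ρ η - x)
        (ρ.restrict (Iio y)) := by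
      refine ((hmom.restrict (s := Iio y)).sub ?_).sub (integrable_const x)
      refine Integrable.mono' (integrable_const (|t| * (Mtot ρ / 2)))
        ((hmt.const_mul t).aestronglyMeasurable) ?_
      filter_upwards with η
      rw [Real.norm_eq_abs, abs_mul]
      exact mul_le_mul_of_nonneg_left (mtilde_abs ρ η) (abs_nonneg t)
    have hsplit : FpotT ρ u₀ τ y x t
        = Fbar ρ y x t + ∫ η in Iio y, (u₀ η * c + mtilde ρ η * c2) ∂ρ := by
      rw [Fbar, ← integral_add hint_g hint_h, FpotT]
      apply integral_congr_ae
      filter_upwards with η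
      rw [hc, hc2, ← he]
      ring
    rw [hsplit, add_sub_cancel_left]
    have := norm_integral_le_of_norm_le_const (μ := ρ.restrict (Iio y)) hbd
    rw [Real.norm_eq_abs] at this
    refine this.trans ?_
    have hmeasle : ((ρ.restrict (Iio y)) univ).toReal ≤ Mtot ρ := by
      rw [Measure.restrict_apply_univ]
      exact ENNReal.toReal_mono (measure_ne_top ρ _) (measure_mono (subset_univ _))
    have hC0 : 0 ≤ U₀ * τ + Mtot ρ / 2 * τ ^ 2 := by positivity
    calc (U₀ * τ + Mtot ρ / 2 * τ ^ 2) * ((ρ.restrict (Iio y)) univ).toReal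
        ≤ (U₀ * τ + Mtot ρ / 2 * τ ^ 2) * Mtot ρ :=
          mul_le_mul_of_nonneg_left hmeasle hC0
      _ = Mtot ρ * (U₀ * τ + Mtot ρ / 2 * τ ^ 2) := mul_comm _ _
  refine ⟨key, ?_⟩
  intro x t ht
  rw [Metric.tendstoUniformly_iff]
  intro ε hε
  have hcont : Tendsto (fun τ : ℝ => Mtot ρ * (U₀ * τ + Mtot ρ / 2 * τ ^ 2))
      (𝓝[>] (0 : ℝ)) (𝓝 0) := by
    have : ContinuousAt (fun τ : ℝ => Mtot ρ * (U₀ * τ + Mtot ρ / 2 * τ ^ 2)) 0 :=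
      (continuous_const.mul ((continuous_const.mul continuous_id).add
        (continuous_const.mul (continuous_pow 2)))).continuousAt
    have h0 : Mtot ρ * (U₀ * (0:ℝ) + Mtot ρ / 2 * (0:ℝ) ^ 2) = 0 := by ring
    simpa [h0] using this.tendsto.mono_left nhdsWithin_le_nhds
  filter_upwards [hcont (Iio_mem_nhds hε), self_mem_nhdsWithin] with τ hτε hτ y
  rw [dist_comm, Real.dist_eq]
  exact lt_of_le_of_lt (key y x t τ ht hτ) hτε
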